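/- (Entrywise null-space bound from the BP proof.) Let D be a convolutional dictionary with mutual coherence μ = μ(D), and let Δ ∈ ℝ^{mN} satisfy DΔ = 0. Then for every index a = (i,j), |Δ_a| ≤ (μ/(μ+1)) · ‖δ_{p(a)}‖_1, where δ_{p(a)} is the restriction of Δ to the stripe index set S_i centered at the position i of the atom d_a (i.e. the set of all indices of atoms that overlap d_a). -/

import Mathlib

open Finset

noncomputable section

attribute [local instance] Classical.propDecidable

/-- The stripe index set `S i`: all column indices `(t, j)` whose shift position `t` lies in the
cyclic window `{i - n + 1, …, i + n - 1}` (mod `N`). -/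
def stripeSet (N n m : ℕ) [NeZero N] (i : ZMod N) : Finset (ZMod N × Fin m) :=
  Finset.univ.filter (fun a =>
    ∃ s ∈ Finset.Icc (-(n : ℤ) + 1) ((n : ℤ) - 1), a.1 = i + (s : ZMod N))

/-- The number of nonzero entries of `Γ` in the `i`-th stripe. -/
def stripeNnz (N n m : ℕ) [NeZero N] (Γ : ZMod N × Fin m → ℝ) (i : ZMod N) : ℕ :=
  ((stripeSet N n m i).filter (fun a => Γ a ≠ 0)).card

/-- The `ℓ_{0,∞}` norm of a global vector: the maximal number of nonzeros in a stripe. -/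
def l0inf (N n m : ℕ) [NeZero N] (Γ : ZMod N × Fin m → ℝ) : ℕ :=
  Finset.univ.sup (fun i : ZMod N => stripeNnz N n m Γ i)

/-- Inner product of two columns of `D`. -/
def colInner {N m : ℕ} [NeZero N] (D : Matrix (ZMod N) (ZMod N × Fin m) ℝ)
    (a b : ZMod N × Fin m) : ℝ :=
  ∑ t, D t a * D t b

/-- The mutual coherence `μ(D)`: the maximal absolute inner product between distinct columns. -/
def mutualCoherence {N m : ℕ} [NeZero N] (D : Matrix (ZMod N) (ZMod N × Fin m) ℝ) : ℝ :=
  sSup {x | ∃ a b : ZMod N × Fin m, a ≠ b ∧ x = |colInner D a b|}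

/-- `D` is a convolutional dictionary: its columns are the cyclic shifts of the columns of a
local dictionary `D_L ∈ ℝ^{n×m}`, and all columns have unit `ℓ2` norm. -/
def IsConvDict (N n m : ℕ) [NeZero N] (D : Matrix (ZMod N) (ZMod N × Fin m) ℝ) : Prop :=
  (∃ DL : Fin n → Fin m → ℝ, ∀ (i t : ZMod N) (j : Fin m),
      D t (i, j) = if h : (t - i).val < n then DL ⟨(t - i).val, h⟩ j else 0) ∧
  ∀ a : ZMod N × Fin m, ∑ t, (D t a) ^ 2 = 1

/-- The shifted mutual coherence `μ_s`: the maximal absolute inner product between a column at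
shift position `i` and a column at shift position `i + s` (distinct columns when `s = 0`). -/
def shiftedMu {N m : ℕ} [NeZero N] (D : Matrix (ZMod N) (ZMod N × Fin m) ℝ) (s : ℤ) : ℝ :=
  sSup {x | ∃ (i : ZMod N) (j l : Fin m), (s = 0 → j ≠ l) ∧
    x = |colInner D (i, j) (i + (s : ZMod N), l)|}

/-- `n_{i,s}(Γ)`: the number of nonzeros of `Γ` in the local chunk at shift `s` of the
`i`-th stripe. -/
def shiftNnz (N m : ℕ) [NeZero N] (Γ : ZMod N × Fin m → ℝ) (i : ZMod N) (s : ℤ) : ℕ :=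
  (Finset.univ.filter (fun j : Fin m => Γ (i + (s : ZMod N), j) ≠ 0)).card

/-- The stripe coherence `ζ_i(Γ) = Σ_s n_{i,s}(Γ) · μ_s`. -/
def stripeCoherence (N n m : ℕ) [NeZero N] (D : Matrix (ZMod N) (ZMod N × Fin m) ℝ)
    (Γ : ZMod N × Fin m → ℝ) (i : ZMod N) : ℝ :=
  ∑ s ∈ Finset.Icc (-(n : ℤ) + 1) ((n : ℤ) - 1), (shiftNnz N m Γ i s : ℝ) * shiftedMu D s

/-- The Stripe-Spark `σ_∞(D)`: the least `ℓ_{0,∞}` norm of a nonzero vector in the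
null space of `D` (`⊤` if the null space is trivial). -/
def stripeSpark (N n m : ℕ) [NeZero N] (D : Matrix (ZMod N) (ZMod N × Fin m) ℝ) : ℕ∞ :=
  sInf {k : ℕ∞ | ∃ Δ : ZMod N × Fin m → ℝ, Δ ≠ 0 ∧ D.mulVec Δ = 0 ∧ (l0inf N n m Δ : ℕ∞) = k}

/-- The `ℓ1` norm of a global vector. -/
def l1norm {N m : ℕ} [NeZero N] (Γ : ZMod N × Fin m → ℝ) : ℝ :=
  ∑ a, |Γ a|



lemma colInner_abs_le_mu {N m : ℕ} [NeZero N] (D : Matrix (ZMod N) (ZMod N × Fin m) ℝ)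
    (hD2 : ∀ a : ZMod N × Fin m, ∑ t, (D t a) ^ 2 = 1)
    {a b : ZMod N × Fin m} (hab : a ≠ b) :
    |colInner D a b| ≤ mutualCoherence D := by
  apply le_csSup
  · refine ⟨1, ?_⟩
    rintro x ⟨c, d, hcd, rfl⟩
    have h := Finset.sum_mul_sq_le_sq_mul_sq Finset.univ (fun t => D t c) (fun t => D t d)
    rw [hD2 c, hD2 d, one_mul] at h
    have h' : (colInner D c d) ^ 2 ≤ 1 := by simpa [colInner] using h
    have := (sq_le_one_iff_abs_le_one _).mp h'
    simpa using this
  · exact ⟨a, b, hab, rfl⟩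

lemma mu_nonneg {N m : ℕ} [NeZero N] (D : Matrix (ZMod N) (ZMod N × Fin m) ℝ) :
    0 ≤ mutualCoherence D := by
  apply Real.sSup_nonneg
  rintro x ⟨a, b, hab, rfl⟩
  exact abs_nonneg _

/-- Entrywise null-space bound from the BP proof: if `DΔ = 0`, then every entry
of `Δ` is bounded by `μ/(μ+1)` times the `ℓ1` norm of the stripe of `Δ` centered at that entry. -/
theorem nullspace_entrywise_bound (N n m : ℕ) [NeZero N]
    (hm : 1 ≤ m) (hn : 1 ≤ n) (hN : 2 * n - 1 ≤ N)
    (D : Matrix (ZMod N) (ZMod N × Fin m) ℝ) (hD : IsConvDict N n m D)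
    (Δ : ZMod N × Fin m → ℝ) (hΔ : D.mulVec Δ = 0) :
    ∀ (i : ZMod N) (j : Fin m),
      |Δ (i, j)| ≤ (mutualCoherence D / (mutualCoherence D + 1)) *
        ∑ a ∈ stripeSet N n m i, |Δ a| := by
  obtain ⟨⟨DL, hDL⟩, hD2⟩ := hD
  set μ := mutualCoherence D with hμ
  have hμ0 : 0 ≤ μ := mu_nonneg D
  intro i j
  set a : ZMod N × Fin m := (i, j) with ha
  -- Step A: ∑ b, colInner D a b * Δ b = 0
  have hswap : ∑ b, colInner D a b * Δ b = 0 := by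
    have : ∑ b, colInner D a b * Δ b = ∑ t, D t a * (D.mulVec Δ t) := by
      simp only [colInner, Matrix.mulVec, dotProduct, Finset.sum_mul, Finset.mul_sum]
      rw [Finset.sum_comm]
      congr 1; ext t; congr 1; ext b; ring
    rw [this, hΔ]; simp
  -- Step B: colInner D a a = 1
  have hself : colInner D a a = 1 := by
    have := hD2 a
    simpa [colInner, sq] using this
  -- Step D: orthogonality outside the stripe
  have horth : ∀ b : ZMod N × Fin m, b ∉ stripeSet N n m i → colInner D a b = 0 := by
    intro b hb
    apply Finset.sum_eq_zero
    intro t _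
    rcases b with ⟨t₀, l⟩
    rw [hDL i t j, hDL t₀ t l]
    by_cases h1 : (t - i).val < n
    · by_cases h2 : (t - t₀).val < n
      · exfalso
        apply hb
        simp only [stripeSet, Finset.mem_filter, Finset.mem_univ, true_and]
        refine ⟨((t - i).val : ℤ) - ((t - t₀).val : ℤ), ?_, ?_⟩
        · rw [Finset.mem_Icc]
          omega
        · push_cast
          have e1 : (((t - i).val : ℕ) : ZMod N) = t - i := by
            rw [ZMod.natCast_val, ZMod.cast_id]
          have e2 : (((t - t₀).val : ℕ) : ZMod N) = t - t₀ := by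
            rw [ZMod.natCast_val, ZMod.cast_id]
          rw [e1, e2]
          ring
      · rw [dif_neg h2, mul_zero]
    · rw [dif_neg h1, zero_mul]
  -- a is in the stripe
  have hamem : a ∈ stripeSet N n m i := by
    simp only [stripeSet, Finset.mem_filter, Finset.mem_univ, true_and]
    refine ⟨0, ?_, by simp [ha]⟩
    rw [Finset.mem_Icc]
    omega
  -- Step C/E: Δ a = -∑ over stripe.erase a
  have hkey : Δ a = -∑ b ∈ (stripeSet N n m i).erase a, colInner D a b * Δ b := by
    have h1 : ∑ b ∈ (Finset.univ : Finset (ZMod N × Fin m)).erase a, colInner D a b * Δ b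
        = ∑ b ∈ (stripeSet N n m i).erase a, colInner D a b * Δ b := by
      symm
      apply Finset.sum_subset
      · intro b hb
        rw [Finset.mem_erase] at hb ⊢
        exact ⟨hb.1, Finset.mem_univ b⟩
      · intro b hb hb'
        rw [Finset.mem_erase] at hb hb'
        have : b ∉ stripeSet N n m i := by
          intro hmem
          exact hb' ⟨hb.1, hmem⟩
        rw [horth b this, zero_mul]
    have h2 := Finset.add_sum_erase Finset.univ (fun b => colInner D a b * Δ b)
      (Finset.mem_univ a)
    have h2' : colInner D a a * Δ a + ∑ x ∈ univ.erase a, colInner D a x * Δ x = 0 := by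
      rw [← hswap]; simpa using h2.symm ▸ h2
    rw [hself, one_mul, h1] at h2'
    linarith
  -- Step F: bound
  have hbound : |Δ a| ≤ μ * ∑ b ∈ (stripeSet N n m i).erase a, |Δ b| := by
    rw [hkey, abs_neg]
    calc |∑ b ∈ (stripeSet N n m i).erase a, colInner D a b * Δ b|
        ≤ ∑ b ∈ (stripeSet N n m i).erase a, |colInner D a b * Δ b| :=
          Finset.abs_sum_le_sum_abs _ _
      _ ≤ ∑ b ∈ (stripeSet N n m i).erase a, μ * |Δ b| := by
          apply Finset.sum_le_sum
          intro b hb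
          rw [abs_mul]
          apply mul_le_mul_of_nonneg_right _ (abs_nonneg _)
          exact colInner_abs_le_mu D hD2 (Finset.mem_erase.mp hb).1.symm
      _ = μ * ∑ b ∈ (stripeSet N n m i).erase a, |Δ b| := by rw [Finset.mul_sum]
  have hsplit : ∑ b ∈ (stripeSet N n m i).erase a, |Δ b|
      = (∑ b ∈ stripeSet N n m i, |Δ b|) - |Δ a| := by
    have := Finset.add_sum_erase (stripeSet N n m i) (fun b => |Δ b|) hamem
    linarith
  rw [hsplit] at hbound
  set S := ∑ b ∈ stripeSet N n m i, |Δ b| with hS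
  have hμ1 : (0:ℝ) < μ + 1 := by linarith
  rw [div_mul_eq_mul_div, le_div_iff₀ hμ1]
  show |Δ a| * (μ + 1) ≤ μ * S
  nlinarith [hbound]


end
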